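/- If μ on ℝ^d is absolutely continuous with compact support and f is a differentiable Kantorovich potential for the inner-product cost c(x,y) = −⟨x,y⟩ between μ and ν, then T = −∇f pushes μ forward to ν and (id, T)_♯ μ is an optimal coupling; i.e., T is a Monge map for the inner-product cost. -/

import Mathlib

open MeasureTheory BigOperators

noncomputable section

variable {d : ℕ}

abbrev Eu (d : ℕ) : Type := EuclideanSpace ℝ (Fin d)

/-- The `c`-transform of `f`, with the infimum over a (compact) set `K`
carrying the first measure. -/
def ctransform (c : EuclideanSpace ℝ (Fin d) → EuclideanSpace ℝ (Fin d) → ℝ)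
    (K : Set (EuclideanSpace ℝ (Fin d))) (f : EuclideanSpace ℝ (Fin d) → ℝ)
    (y : EuclideanSpace ℝ (Fin d)) : ℝ :=
  ⨅ x : K, (c x y - f x)

/-- `f` is a Kantorovich potential for cost `c` between `μ` and `ν`. -/
def IsKantorovichPotential
    (c : EuclideanSpace ℝ (Fin d) → EuclideanSpace ℝ (Fin d) → ℝ)
    (μ ν : Measure (EuclideanSpace ℝ (Fin d)))
    (K : Set (EuclideanSpace ℝ (Fin d)))
    (f : EuclideanSpace ℝ (Fin d) → ℝ) : Prop :=
  Continuous f ∧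
    ∀ g : EuclideanSpace ℝ (Fin d) → ℝ, Continuous g →
      (∫ z, g z ∂μ) + (∫ w, ctransform c K g w ∂ν)
        ≤ (∫ z, f z ∂μ) + (∫ w, ctransform c K f w ∂ν)

namespace BrenierAux

open Set Metric Filter Topology
open scoped ENNReal NNReal


/-- inf over `K0` of `y ↦ -⟪x,y⟫ - G y`. -/
def infC (K0 : Set (Eu d)) (G : (Eu d) → ℝ) (x : (Eu d)) : ℝ :=
  ⨅ y : K0, (-(inner ℝ x (y : (Eu d)) : ℝ) - G y)

lemma infC_attain {K0 : Set (Eu d)} (hK0 : IsCompact K0) (hne : K0.Nonempty)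
    {G : (Eu d) → ℝ} (hG : ContinuousOn G K0) (x : (Eu d)) :
    ∃ y ∈ K0, (∀ z ∈ K0, -(inner ℝ x y : ℝ) - G y ≤ -(inner ℝ x z : ℝ) - G z) ∧
      infC K0 G x = -(inner ℝ x y : ℝ) - G y := by
  have hcont : Continuous fun z : (Eu d) => -(inner ℝ x z : ℝ) :=
    (continuous_const.inner continuous_id).neg
  obtain ⟨y, hyK, hmin⟩ := hK0.exists_isMinOn hne (hcont.continuousOn.sub hG)
  have hmin' : ∀ z ∈ K0, -(inner ℝ x y : ℝ) - G y ≤ -(inner ℝ x z : ℝ) - G z :=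
    fun z hz => isMinOn_iff.mp hmin z hz
  refine ⟨y, hyK, hmin', ?_⟩
  have hbdd : BddBelow (Set.range fun z : K0 => -(inner ℝ x (z : (Eu d)) : ℝ) - G z) := by
    refine ⟨-(inner ℝ x y : ℝ) - G y, ?_⟩
    rintro v ⟨z, rfl⟩
    exact hmin' z z.2
  haveI : Nonempty K0 := hne.to_subtype
  exact le_antisymm (ciInf_le hbdd ⟨y, hyK⟩) (le_ciInf fun z => hmin' z z.2)

lemma infC_le {K0 : Set (Eu d)} (hK0 : IsCompact K0)
    {G : (Eu d) → ℝ} (hG : ContinuousOn G K0)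
    {y : (Eu d)} (hy : y ∈ K0) (x : (Eu d)) :
    infC K0 G x ≤ -(inner ℝ x y : ℝ) - G y := by
  obtain ⟨y0, hy0, hmin, heq⟩ := infC_attain hK0 ⟨y, hy⟩ hG x
  rw [heq]; exact hmin y hy

lemma le_infC {K0 : Set (Eu d)} (hne : K0.Nonempty) {G : (Eu d) → ℝ} {x : (Eu d)} {b : ℝ}
    (h : ∀ z ∈ K0, b ≤ -(inner ℝ x z : ℝ) - G z) :
    b ≤ infC K0 G x := by
  haveI : Nonempty K0 := hne.to_subtype
  exact le_ciInf fun z => h z z.2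

lemma infC_continuous {K0 : Set (Eu d)} (hK0 : IsCompact K0) (hne : K0.Nonempty)
    {G : (Eu d) → ℝ} (hG : ContinuousOn G K0) : Continuous (infC K0 G) := by
  obtain ⟨R, hR⟩ : ∃ R, ∀ y ∈ K0, ‖y‖ ≤ R := by
    obtain ⟨R, hR⟩ := hK0.isBounded.subset_closedBall 0
    exact ⟨R, fun y hy => by simpa [mem_closedBall, dist_eq_norm] using hR hy⟩
  have key : ∀ x1 x2 : (Eu d), infC K0 G x1 - infC K0 G x2 ≤ R * dist x1 x2 := by
    intro x1 x2
    obtain ⟨y, hy, _, heq⟩ := infC_attain hK0 hne hG x2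
    have h1 : infC K0 G x1 ≤ -(inner ℝ x1 y : ℝ) - G y := infC_le hK0 hG hy x1
    have h2 : -(inner ℝ x1 y : ℝ) - G y - (-(inner ℝ x2 y : ℝ) - G y)
        = (inner ℝ (x2 - x1) y : ℝ) := by
      rw [inner_sub_left]; ring
    have h3 : (inner ℝ (x2 - x1) y : ℝ) ≤ R * dist x1 x2 := by
      calc (inner ℝ (x2 - x1) y : ℝ) ≤ |(inner ℝ (x2 - x1) y : ℝ)| := le_abs_self _
        _ ≤ ‖x2 - x1‖ * ‖y‖ := abs_real_inner_le_norm _ _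
        _ ≤ ‖x2 - x1‖ * R := by
            refine mul_le_mul_of_nonneg_left (hR y hy) (norm_nonneg _)
        _ = R * dist x1 x2 := by rw [dist_eq_norm, norm_sub_rev x2 x1]; ring
    rw [heq]; linarith
  have hlip : LipschitzWith (Real.toNNReal R) (infC K0 G) := by
    apply LipschitzWith.of_dist_le_mul
    intro x1 x2
    rw [Real.dist_eq, abs_sub_le_iff]
    have hRR : (Real.toNNReal R : ℝ) = max R 0 := by
      simp [Real.coe_toNNReal']
    constructor
    · calc infC K0 G x1 - infC K0 G x2 ≤ R * dist x1 x2 := key x1 x2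
        _ ≤ (Real.toNNReal R : ℝ) * dist x1 x2 := by
            apply mul_le_mul_of_nonneg_right _ dist_nonneg
            rw [hRR]; exact le_max_left _ _
    · calc infC K0 G x2 - infC K0 G x1 ≤ R * dist x2 x1 := key x2 x1
        _ ≤ (Real.toNNReal R : ℝ) * dist x1 x2 := by
            rw [dist_comm x2 x1]
            apply mul_le_mul_of_nonneg_right _ dist_nonneg
            rw [hRR]; exact le_max_left _ _
  exact hlip.continuous

lemma fderiv_eq_zero_of_isMaxOn_density {φ : (Eu d) → ℝ} {s : Set (Eu d)} {x : (Eu d)}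
    (hs : MeasurableSet s)
    (hφ : DifferentiableAt ℝ φ x) (hmax : ∀ z ∈ s, φ z ≤ φ x)
    (hx : Tendsto (fun r => volume (s ∩ closedBall x r) / volume (closedBall x r))
      (𝓝[>] (0:ℝ)) (𝓝 1)) :
    fderiv ℝ φ x = 0 := by
  set L := fderiv ℝ φ x with hL
  by_contra hL0
  -- find a unit vector `v` with `L v = a > 0`
  obtain ⟨u, hu⟩ : ∃ u : (Eu d), L u ≠ 0 := by
    by_contra h
    push_neg at h
    exact hL0 (ContinuousLinearMap.ext fun u => by simp [h u])
  have hu0 : u ≠ 0 := fun h => hu (by simp [h])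
  obtain ⟨u, hu⟩ : ∃ u : (Eu d), 0 < L u := by
    rcases lt_trichotomy (L u) 0 with h | h | h
    · exact ⟨-u, by simpa using neg_pos.mpr h⟩
    · exact absurd h hu
    · exact ⟨u, h⟩
  have hu0 : u ≠ 0 := by
    intro h; rw [h] at hu; simp at hu
  set v : (Eu d) := ‖u‖⁻¹ • u with hv
  have hvnorm : ‖v‖ = 1 := by
    rw [hv, norm_smul, norm_inv, norm_norm, inv_mul_cancel₀ (norm_ne_zero_iff.mpr hu0)]
  set a : ℝ := L v with ha
  have ha0 : 0 < a := by
    rw [ha, hv, L.map_smul]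
    exact mul_pos (inv_pos.mpr (norm_pos_iff.mpr hu0)) hu
  -- choose δ
  set δ : ℝ := min (1/2) (a / (4 * (‖L‖ + 1))) with hδ
  have hδ0 : 0 < δ := lt_min (by norm_num) (by positivity)
  have hδhalf : δ ≤ 1/2 := min_le_left _ _
  have hδL : ‖L‖ * δ ≤ a / 4 := by
    have h1 : δ ≤ a / (4 * (‖L‖ + 1)) := min_le_right _ _
    have h2 : ‖L‖ * δ ≤ ‖L‖ * (a / (4 * (‖L‖ + 1))) :=
      mul_le_mul_of_nonneg_left h1 (norm_nonneg _)
    have h3 : ‖L‖ * (a / (4 * (‖L‖ + 1))) ≤ a / 4 := by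
      rw [← mul_div_assoc, div_le_div_iff₀ (by positivity) (by norm_num)]
      nlinarith [norm_nonneg L, ha0.le]
    linarith
  have h1δ : (0:ℝ) < 1 + δ := by linarith
  -- the density threshold
  set n := Module.finrank ℝ (EuclideanSpace ℝ (Fin d)) with hn
  set θ : ℝ≥0∞ := ENNReal.ofReal ((δ / (1 + δ)) ^ n) with hθ
  have hθ0 : 0 < θ := by
    rw [hθ]
    apply ENNReal.ofReal_pos.mpr
    positivity
  have hθtop : θ ≠ ⊤ := ENNReal.ofReal_ne_top
  -- little-o bound
  have hlo := Asymptotics.IsLittleO.def (hφ.hasFDerivAt.isLittleO) (show (0:ℝ) < a/8 by positivity)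
  rw [Metric.eventually_nhds_iff] at hlo
  obtain ⟨η, hη0, hηball⟩ := hlo
  -- eventual properties of r
  have hmul : Tendsto (fun r : ℝ => (1 + δ) * r) (𝓝[>] (0:ℝ)) (𝓝[>] (0:ℝ)) := by
    apply tendsto_nhdsWithin_of_tendsto_nhds_of_eventually_within
    · have hc : Continuous (fun r : ℝ => (1 + δ) * r) := continuous_const.mul continuous_id
      have := hc.tendsto (0:ℝ)
      simpa using this.mono_left nhdsWithin_le_nhds
    · filter_upwards [self_mem_nhdsWithin] with r (hr : 0 < r)
      exact mul_pos h1δ hr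
  have hev1 : ∀ᶠ r in 𝓝[>] (0:ℝ),
      1 - θ < volume (s ∩ closedBall x ((1 + δ) * r)) / volume (closedBall x ((1 + δ) * r)) := by
    have h1θ : 1 - θ < 1 := ENNReal.sub_lt_self ENNReal.one_ne_top one_ne_zero hθ0.ne'
    have := (hx.comp hmul).eventually (Ioi_mem_nhds h1θ)
    simpa using this
  have hev2 : ∀ᶠ r in 𝓝[>] (0:ℝ), (1 + δ) * r < η := by
    have : ∀ᶠ r in 𝓝[>] (0:ℝ), r < η / (1 + δ) := by
      apply eventually_nhdsWithin_of_eventually_nhds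
      exact eventually_lt_nhds (by positivity)
    filter_upwards [this] with r hr
    rw [← lt_div_iff₀' h1δ]
    exact hr
  obtain ⟨r, hbig, hrη, (hr0 : 0 < r)⟩ := (hev1.and (hev2.and self_mem_nhdsWithin)).exists
  by_cases hsne : (s ∩ closedBall (x + r • v) (δ * r)).Nonempty
  · obtain ⟨z, hzs, hzball⟩ := hsne
    rw [mem_closedBall, dist_eq_norm] at hzball
    set w : (Eu d) := z - x - r • v with hw
    have hzxw : z - x = r • v + w := by rw [hw]; abel
    have hwnorm : ‖w‖ ≤ δ * r := by
      have : z - (x + r • v) = w := by rw [hw]; abel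
      rwa [this] at hzball
    have hzx : ‖z - x‖ ≤ (1 + δ) * r := by
      rw [hzxw]
      calc ‖r • v + w‖ ≤ ‖r • v‖ + ‖w‖ := norm_add_le _ _
        _ ≤ r * 1 + δ * r := by
            rw [norm_smul, hvnorm, Real.norm_eq_abs, abs_of_pos hr0]
            linarith [hwnorm]
        _ = (1 + δ) * r := by ring
    have hdist : dist z x < η := by
      rw [dist_eq_norm]; exact lt_of_le_of_lt hzx hrη
    have hball := hηball hdist
    rw [Real.norm_eq_abs, abs_le] at hball
    have hLw : |L w| ≤ ‖L‖ * (δ * r) := by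
      calc |L w| = ‖L w‖ := (Real.norm_eq_abs _).symm
        _ ≤ ‖L‖ * ‖w‖ := L.le_opNorm w
        _ ≤ ‖L‖ * (δ * r) := mul_le_mul_of_nonneg_left hwnorm (norm_nonneg _)
    have hLzx : r * a - ‖L‖ * (δ * r) ≤ L (z - x) := by
      rw [hzxw, map_add, L.map_smul, smul_eq_mul, ← ha]
      have := (abs_le.mp hLw).1
      linarith
    have hmaxz : φ z ≤ φ x := hmax z hzs
    have hlow := hball.1
    have hN : (0:ℝ) ≤ ‖z - x‖ := norm_nonneg _
    have hLδr : ‖L‖ * (δ * r) ≤ a / 4 * r := by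
      have := mul_le_mul_of_nonneg_right hδL hr0.le
      calc ‖L‖ * (δ * r) = ‖L‖ * δ * r := by ring
        _ ≤ a / 4 * r := this
    have hN2 : a / 8 * ‖z - x‖ ≤ a / 8 * ((1 + δ) * r) :=
      mul_le_mul_of_nonneg_left hzx (by positivity)
    have h4 : (1 + δ) * r ≤ 3/2 * r :=
      mul_le_mul_of_nonneg_right (by linarith) hr0.le
    have h5 : a/8 * ((1 + δ) * r) ≤ a/8 * (3/2 * r) :=
      mul_le_mul_of_nonneg_left h4 (by positivity)
    have hP : 0 < a * r := mul_pos ha0 hr0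
    linarith [hlow, hmaxz, hLzx, hLδr, hN2, h5, hP]
  · have hsub : closedBall (x + r • v) (δ * r) ⊆ closedBall x ((1 + δ) * r) \ s := by
      intro z hz
      refine ⟨?_, fun hzs => hsne ⟨z, hzs, hz⟩⟩
      rw [mem_closedBall] at hz ⊢
      have hd : dist (x + r • v) x = r := by
        rw [dist_eq_norm, add_sub_cancel_left, norm_smul, hvnorm, Real.norm_eq_abs,
          abs_of_pos hr0, mul_one]
      calc dist z x ≤ dist z (x + r • v) + dist (x + r • v) x := dist_triangle _ _ _
        _ ≤ δ * r + r := by rw [hd]; linarith [hz]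
        _ = (1 + δ) * r := by ring
    set V := volume (closedBall x ((1 + δ) * r)) with hV
    have hV0 : V ≠ 0 := (measure_closedBall_pos volume x (by positivity)).ne'
    have hVtop : V ≠ ⊤ := measure_closedBall_lt_top.ne
    have hsmall : volume (closedBall (x + r • v) (δ * r)) = θ * V := by
      rw [hV, Measure.addHaar_closedBall volume _ (by positivity : (0:ℝ) ≤ δ * r),
        Measure.addHaar_closedBall volume _ (by positivity : (0:ℝ) ≤ (1 + δ) * r), hθ,
        ← mul_assoc, ← ENNReal.ofReal_mul (by positivity)]
      congr 2
      rw [← hn, ← mul_pow]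
      congr 1
      field_simp
    have hdisjoint : Disjoint (s ∩ closedBall x ((1 + δ) * r))
        (closedBall (x + r • v) (δ * r)) := by
      rw [Set.disjoint_left]
      intro z hz1 hz2
      exact (hsub hz2).2 hz1.1
    have hdisj : volume (s ∩ closedBall x ((1 + δ) * r)) + θ * V ≤ V := by
      rw [← hsmall, ← measure_union hdisjoint measurableSet_closedBall]
      apply measure_mono
      rintro z (⟨_, hz⟩ | hz)
      · exact hz
      · exact (hsub hz).1
    have hle : volume (s ∩ closedBall x ((1 + δ) * r)) / V ≤ 1 - θ := by
      rw [ENNReal.div_le_iff hV0 hVtop]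
      have h1 : (1 - θ) * V = V - θ * V := by
        rw [ENNReal.sub_mul (fun _ _ => hVtop), one_mul]
      rw [h1]
      exact ENNReal.le_sub_of_add_le_right
        (ENNReal.mul_ne_top hθtop hVtop) hdisj
    exact absurd hbig (not_lt.mpr hle)

end BrenierAux

section MainProof

open Set Metric Filter Topology BoundedContinuousFunction BrenierAux
open scoped ENNReal NNReal

set_option maxHeartbeats 1600000 in
/-- if `μ` is absolutely continuous with compact support and `f`
is a differentiable Kantorovich potential for the cost `c(x,y) = −⟨x,y⟩`
between `μ` and `ν`, then `T = −∇f` pushes `μ` forward to `ν` and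
`(id, T)_♯ μ` is an optimal coupling for this cost, i.e. `T` is a Monge map. -/
theorem monge_map_neg_grad_potential_inner_cost
    (μ ν : Measure (EuclideanSpace ℝ (Fin d)))
    [IsProbabilityMeasure μ] [IsProbabilityMeasure ν]
    (K K' : Set (EuclideanSpace ℝ (Fin d)))
    (hK : IsCompact K) (hKne : K.Nonempty) (hμK : μ K = 1)
    (hK' : IsCompact K') (hνK' : ν K' = 1)
    (hac : μ ≪ volume)
    (f : EuclideanSpace ℝ (Fin d) → ℝ)
    (hdiff : Differentiable ℝ f)
    (hf : IsKantorovichPotential (fun x y => -(inner ℝ x y : ℝ)) μ ν K f) :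
    Measure.map (fun x => -gradient f x) μ = ν ∧
      ∀ π : Measure (EuclideanSpace ℝ (Fin d) × EuclideanSpace ℝ (Fin d)),
        π.map Prod.fst = μ → π.map Prod.snd = ν →
        (∫ p, -(inner ℝ p.1 p.2 : ℝ)
            ∂(μ.map (fun x => (x, -gradient f x))))
          ≤ ∫ p, -(inner ℝ p.1 p.2 : ℝ) ∂π := by
  classical
  obtain ⟨hfcont, hfmax⟩ := hf
  set T : (Eu d) → (Eu d) := fun x => -gradient f x with hTdef
  -- measurability of T
  have hTmeas : Measurable T := by
    have h1 : Measurable (fun x : (Eu d) => fderiv ℝ f x) := measurable_fderiv ℝ f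
    have h2 : Continuous fun L : (Eu d) →L[ℝ] ℝ => (InnerProductSpace.toDual ℝ (Eu d)).symm L :=
      (InnerProductSpace.toDual ℝ (Eu d)).symm.continuous
    exact ((h2.measurable.comp h1).neg : Measurable fun x : (Eu d) =>
      -(InnerProductSpace.toDual ℝ (Eu d)).symm (fderiv ℝ f x))
  -- basic measure facts
  have hKm : MeasurableSet K := hK.isClosed.measurableSet
  have hK'm : MeasurableSet K' := hK'.isClosed.measurableSet
  have hμKc : μ Kᶜ = 0 := (prob_compl_eq_zero_iff hKm).mpr hμK
  have hνK'c : ν K'ᶜ = 0 := (prob_compl_eq_zero_iff hK'm).mpr hνK'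
  have haeK : ∀ᵐ x ∂μ, x ∈ K := by
    rw [ae_iff]
    exact hμKc
  have haeK' : ∀ᵐ y ∂ν, y ∈ K' := by
    rw [ae_iff]
    exact hνK'c
  have hK'ne : K'.Nonempty := by
    rcases K'.eq_empty_or_nonempty with h | h
    · exfalso; rw [h] at hνK'; simp at hνK'
    · exact h
  have hμres : μ.restrict K = μ := Measure.restrict_eq_self_of_ae_mem haeK
  have hνres : ν.restrict K' = ν := Measure.restrict_eq_self_of_ae_mem haeK'
  have hintμ : ∀ g : (Eu d) → ℝ, Continuous g → Integrable g μ := by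
    intro g hg
    have : IntegrableOn g K μ := hg.continuousOn.integrableOn_compact hK
    rwa [IntegrableOn, hμres] at this
  have hintν : ∀ g : (Eu d) → ℝ, Continuous g → Integrable g ν := by
    intro g hg
    have : IntegrableOn g K' ν := hg.continuousOn.integrableOn_compact hK'
    rwa [IntegrableOn, hνres] at this
  -- rewrite ctransform as infC
  have hct : ∀ g : (Eu d) → ℝ,
      ctransform (fun x y => -(inner ℝ x y : ℝ)) K g = infC K g := by
    intro g
    funext y
    unfold ctransform infC
    congr 1
    funext z
    rw [real_inner_comm]
  set fc : (Eu d) → ℝ := infC K f with hfcdef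
  have hfccont : Continuous fc := infC_continuous hK hKne hfcont.continuousOn
  set ft : (Eu d) → ℝ := infC K' fc with hftdef
  have hftcont : Continuous ft := infC_continuous hK' hK'ne hfccont.continuousOn
  have hkantor : ∀ g : (Eu d) → ℝ, Continuous g →
      (∫ z, g z ∂μ) + (∫ w, infC K g w ∂ν)
        ≤ (∫ z, f z ∂μ) + (∫ w, fc w ∂ν) := by
    intro g hg
    have := hfmax g hg
    rwa [hct g, hct f] at this
  -- f ≤ ft on K
  have hfle : ∀ x ∈ K, f x ≤ ft x := by
    intro x hx
    apply le_infC hK'ne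
    intro y hy
    have h1 := infC_le hK hfcont.continuousOn hx y
    rw [real_inner_comm] at h1
    linarith
  -- ft = f μ-a.e.
  have hft_eq_ae : ∀ᵐ x ∂μ, ft x = f x := by
    have h1 : ∀ y ∈ K', fc y ≤ infC K ft y := by
      intro y hy
      apply le_infC hKne
      intro z hz
      have h2 := infC_le hK' hfccont.continuousOn hy z
      rw [real_inner_comm] at h2
      linarith
    have h2 : ∫ w, fc w ∂ν ≤ ∫ w, infC K ft w ∂ν := by
      apply integral_mono_ae (hintν fc hfccont)
        (hintν _ (infC_continuous hK hKne hftcont.continuousOn))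
      exact haeK'.mono fun y hy => h1 y hy
    have h3 := hkantor ft hftcont
    have h4 : ∫ z, ft z ∂μ ≤ ∫ z, f z ∂μ := by linarith
    have h5 : 0 ≤ᵐ[μ] fun x => ft x - f x :=
      haeK.mono fun x hx => sub_nonneg.mpr (hfle x hx)
    have h6 : Integrable (fun x => ft x - f x) μ := (hintμ _ hftcont).sub (hintμ _ hfcont)
    have h7 : ∫ x, (ft x - f x) ∂μ = 0 := by
      refine le_antisymm ?_ (integral_nonneg_of_ae h5)
      rw [integral_sub (hintμ _ hftcont) (hintμ _ hfcont)]
      linarith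
    have h8 := (integral_eq_zero_iff_of_nonneg_ae h5 h6).mp h7
    filter_upwards [h8] with x hx
    have hx' : ft x - f x = 0 := hx
    linarith
  -- density points
  have hdens : ∀ᵐ x ∂μ, Tendsto
      (fun r => volume (K ∩ closedBall x r) / volume (closedBall x r))
      (𝓝[>] (0:ℝ)) (𝓝 1) := by
    have hb := Besicovitch.ae_tendsto_measure_inter_div (volume : Measure (Eu d)) K
    have hacK : μ ≪ (volume : Measure (Eu d)).restrict K := by
      intro s hs0
      rw [Measure.restrict_apply' hKm] at hs0
      have h1 : μ (s ∩ K) = 0 := hac hs0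
      have h2 : μ (s ∩ Kᶜ) = 0 := measure_mono_null Set.inter_subset_right hμKc
      have h3 : s ⊆ (s ∩ K) ∪ (s ∩ Kᶜ) := by
        intro z hz
        by_cases hzK : z ∈ K
        · exact Or.inl ⟨hz, hzK⟩
        · exact Or.inr ⟨hz, hzK⟩
      exact measure_mono_null h3 (by rw [measure_union_null_iff]; exact ⟨h1, h2⟩)
    exact hb.filter_mono hacK.ae_le
  -- the key pointwise a.e. statement
  have hkey : ∀ᵐ x ∂μ, T x ∈ K' ∧ ft x = f x ∧
      f x = -(inner ℝ x (T x) : ℝ) - fc (T x) ∧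
      (∀ y ∈ K', ft x = -(inner ℝ x y : ℝ) - fc y → y = T x) := by
    filter_upwards [haeK, hft_eq_ae, hdens] with x hxK hftx hdx
    have huniq : ∀ y ∈ K', ft x = -(inner ℝ x y : ℝ) - fc y → y = T x := by
      intro y hy hyeq
      have hmax : ∀ z ∈ K, f z + (inner ℝ z y : ℝ) ≤ f x + (inner ℝ x y : ℝ) := by
        intro z hz
        have h1 : f z ≤ ft z := hfle z hz
        have h2 : ft z ≤ -(inner ℝ z y : ℝ) - fc y := infC_le hK' hfccont.continuousOn hy z
        have h3 : f x = -(inner ℝ x y : ℝ) - fc y := hftx ▸ hyeq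
        linarith
      have heqf : (fun z : (Eu d) => (inner ℝ z y : ℝ)) = fun z => (innerSL ℝ y) z :=
        funext fun z => by rw [innerSL_apply_apply, real_inner_comm]
      have hinner : HasFDerivAt (fun z : (Eu d) => (inner ℝ z y : ℝ)) (innerSL ℝ y) x := by
        rw [heqf]
        exact (innerSL ℝ y).hasFDerivAt
      have hsum : HasFDerivAt (fun z : (Eu d) => f z + (inner ℝ z y : ℝ))
          (fderiv ℝ f x + innerSL ℝ y) x := ((hdiff x).hasFDerivAt).add hinner
      have hD := fderiv_eq_zero_of_isMaxOn_density hKm hsum.differentiableAt hmax hdx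
      have h0 : fderiv ℝ f x + innerSL ℝ y = 0 := by rw [← hsum.fderiv]; exact hD
      have hfd : fderiv ℝ f x = -(innerSL ℝ y) := by
        rw [eq_neg_iff_add_eq_zero]; exact h0
      have htd : (innerSL ℝ y : (Eu d) →L[ℝ] ℝ)
          = InnerProductSpace.toDual ℝ (Eu d) y := by
        ext z
        simp [InnerProductSpace.toDual_apply_apply]
      have hgrad : gradient f x = -y := by
        show (InnerProductSpace.toDual ℝ (Eu d)).symm (fderiv ℝ f x) = -y
        rw [hfd, htd, map_neg, LinearIsometryEquiv.symm_apply_apply]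
      show y = T x
      rw [hTdef]
      simp [hgrad]
    obtain ⟨y0, hy0K, hmin0, heq0⟩ := infC_attain hK' hK'ne hfccont.continuousOn x
    have hy0T : y0 = T x := huniq y0 hy0K heq0
    refine ⟨hy0T ▸ hy0K, hftx, ?_, huniq⟩
    calc f x = ft x := hftx.symm
      _ = -(inner ℝ x y0 : ℝ) - fc y0 := heq0
      _ = -(inner ℝ x (T x) : ℝ) - fc (T x) := by rw [hy0T]
  have hTK' : ∀ᵐ x ∂μ, T x ∈ K' := hkey.mono fun x hx => hx.1
  -- Part 1 : pushforward
  have main : ∀ h : (Eu d) →ᵇ ℝ, ∫ y, h y ∂ν ≤ ∫ x, h (T x) ∂μ := by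
    intro h
    have habs : ∀ y, |h y| ≤ ‖h‖ := fun y => by
      rw [← Real.norm_eq_abs]; exact h.norm_coe_le_norm y
    set ε : ℕ → ℝ := fun n => 1 / (n + 1) with hεdef
    have hε0 : ∀ n, 0 < ε n := fun n => by positivity
    have hεlim : Tendsto ε atTop (𝓝 0) := tendsto_one_div_add_atTop_nhds_zero_nat
    set G : ℕ → (Eu d) → ℝ := fun n y => fc y + ε n * h y with hGdef
    have hGcont : ∀ n, Continuous (G n) := fun n =>
      hfccont.add (continuous_const.mul h.continuous)
    set g : ℕ → (Eu d) → ℝ := fun n => infC K' (G n) with hgdef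
    have hgcont : ∀ n, Continuous (g n) :=
      fun n => infC_continuous hK' hK'ne (hGcont n).continuousOn
    -- uniform bounds
    have hgub : ∀ n x, g n x ≤ ft x + ε n * ‖h‖ := by
      intro n x
      obtain ⟨y0, hy0, _, heq0⟩ := infC_attain hK' hK'ne hfccont.continuousOn x
      have h1 : g n x ≤ -(inner ℝ x y0 : ℝ) - (fc y0 + ε n * h y0) :=
        infC_le hK' (hGcont n).continuousOn hy0 x
      have heq0' : ft x = -(inner ℝ x y0 : ℝ) - fc y0 := heq0
      have h2 : ε n * (-‖h‖) ≤ ε n * h y0 :=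
        mul_le_mul_of_nonneg_left (by linarith [abs_le.mp (habs y0)]) (hε0 n).le
      nlinarith [h1, heq0', h2]
    have hglb : ∀ n x, ft x - ε n * ‖h‖ ≤ g n x := by
      intro n x
      apply le_infC hK'ne
      intro y hy
      have h1 : ft x ≤ -(inner ℝ x y : ℝ) - fc y := infC_le hK' hfccont.continuousOn hy x
      have h2 : ε n * h y ≤ ε n * ‖h‖ :=
        mul_le_mul_of_nonneg_left (by linarith [abs_le.mp (habs y)]) (hε0 n).le
      show ft x - ε n * ‖h‖ ≤ -(inner ℝ x y : ℝ) - (fc y + ε n * h y)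
      linarith
    -- dual inequality
    have hdual : ∀ n, ε n * ∫ y, h y ∂ν ≤ ∫ x, (ft x - g n x) ∂μ := by
      intro n
      have hkan := hkantor (g n) (hgcont n)
      have hptw : ∀ w ∈ K', fc w + ε n * h w ≤ infC K (g n) w := by
        intro w hw
        apply le_infC hKne
        intro z hz
        have h1 : g n z ≤ -(inner ℝ z w : ℝ) - (fc w + ε n * h w) :=
          infC_le hK' (hGcont n).continuousOn hw z
        rw [real_inner_comm] at h1
        linarith
      have hint1 : ∫ w, (fc w + ε n * h w) ∂ν ≤ ∫ w, infC K (g n) w ∂ν := by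
        apply integral_mono_ae
          ((hintν _ hfccont).add ((hintν _ h.continuous).const_mul _))
          (hintν _ (infC_continuous hK hKne (hgcont n).continuousOn))
        exact haeK'.mono hptw
      have hsplit : ∫ w, (fc w + ε n * h w) ∂ν
          = (∫ w, fc w ∂ν) + ε n * ∫ y, h y ∂ν := by
        rw [integral_add (hintν _ hfccont) ((hintν _ h.continuous).const_mul _),
          integral_const_mul]
      have hsub : ∫ x, (ft x - g n x) ∂μ = (∫ x, ft x ∂μ) - ∫ x, g n x ∂μ :=
        integral_sub (hintμ _ hftcont) (hintμ _ (hgcont n))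
      have hfteq : ∫ x, ft x ∂μ = ∫ x, f x ∂μ := integral_congr_ae hft_eq_ae
      linarith [hkan, hint1, hsplit, hsub, hfteq]
    -- pointwise limit a.e.
    have hlim : ∀ᵐ x ∂μ,
        Tendsto (fun n => (ft x - g n x) / ε n) atTop (𝓝 (h (T x))) := by
      filter_upwards [hkey] with x hx
      obtain ⟨hTxK', hftfx, hfx, huniq⟩ := hx
      have hftTx : ft x = -(inner ℝ x (T x) : ℝ) - fc (T x) := by rw [hftfx]; exact hfx
      have hlb : ∀ n, h (T x) ≤ (ft x - g n x) / ε n := by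
        intro n
        have h1 : g n x ≤ -(inner ℝ x (T x) : ℝ) - (fc (T x) + ε n * h (T x)) :=
          infC_le hK' (hGcont n).continuousOn hTxK' x
        rw [le_div_iff₀ (hε0 n)]
        nlinarith [h1, hftTx]
      have hchoice : ∀ n : ℕ, ∃ y, y ∈ K' ∧
          (∀ z ∈ K', -(inner ℝ x y : ℝ) - G n y ≤ -(inner ℝ x z : ℝ) - G n z) ∧
          g n x = -(inner ℝ x y : ℝ) - G n y := by
        intro n
        obtain ⟨y, hy, hmin, heq⟩ := infC_attain hK' hK'ne (hGcont n).continuousOn x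
        exact ⟨y, hy, hmin, heq⟩
      choose Y hYK hYmin hYeq using hchoice
      have hub : ∀ n, (ft x - g n x) / ε n ≤ h (Y n) := by
        intro n
        have h1 : ft x ≤ -(inner ℝ x (Y n) : ℝ) - fc (Y n) :=
          infC_le hK' hfccont.continuousOn (hYK n) x
        have h2 : g n x = -(inner ℝ x (Y n) : ℝ) - (fc (Y n) + ε n * h (Y n)) := hYeq n
        rw [div_le_iff₀ (hε0 n)]
        nlinarith [h1, h2]
      have hq : Tendsto (fun n => h (Y n)) atTop (𝓝 (h (T x))) := by
        apply tendsto_of_subseq_tendsto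
        intro ns hns
        obtain ⟨ystar, hystarK, ms, hms, hconv⟩ := hK'.tendsto_subseq fun n => hYK (ns n)
        refine ⟨ms, ?_⟩
        have hysT : ystar = T x := by
          apply huniq _ hystarK
          have hle1 : ∀ n, ft x ≤ -(inner ℝ x (Y n) : ℝ) - fc (Y n) := fun n =>
            infC_le hK' hfccont.continuousOn (hYK n) x
          have hle2 : ∀ n, -(inner ℝ x (Y n) : ℝ) - fc (Y n) ≤ ft x + 2 * (ε n * ‖h‖) := by
            intro n
            have h2 : g n x = -(inner ℝ x (Y n) : ℝ) - (fc (Y n) + ε n * h (Y n)) := hYeq n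
            have h3 := hgub n x
            have h4 : ε n * h (Y n) ≤ ε n * ‖h‖ :=
              mul_le_mul_of_nonneg_left (by linarith [abs_le.mp (habs (Y n))]) (hε0 n).le
            nlinarith [h2, h3, h4]
          have hεcomp : Tendsto (fun k => ε (ns (ms k))) atTop (𝓝 0) :=
            hεlim.comp (hns.comp hms.tendsto_atTop)
          have hupper : Tendsto (fun k => ft x + 2 * (ε (ns (ms k)) * ‖h‖)) atTop
              (𝓝 (ft x)) := by
            have h5 : Tendsto (fun k => 2 * (ε (ns (ms k)) * ‖h‖)) atTop (𝓝 (2 * (0 * ‖h‖))) :=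
              (hεcomp.mul_const ‖h‖).const_mul 2
            rw [show (2:ℝ) * (0 * ‖h‖) = 0 by ring] at h5
            have h6 : Tendsto (fun k => ft x + 2 * (ε (ns (ms k)) * ‖h‖)) atTop (𝓝 (ft x + 0)) :=
              tendsto_const_nhds.add h5
            rwa [add_zero] at h6
          have hsq : Tendsto (fun k => -(inner ℝ x (Y (ns (ms k))) : ℝ) - fc (Y (ns (ms k))))
              atTop (𝓝 (ft x)) :=
            tendsto_of_tendsto_of_tendsto_of_le_of_le tendsto_const_nhds hupper
              (fun k => hle1 (ns (ms k))) (fun k => hle2 (ns (ms k)))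
          have hc : Continuous fun y : (Eu d) => -(inner ℝ x y : ℝ) - fc y :=
            (continuous_const.inner continuous_id).neg.sub hfccont
          have hcont2 : Tendsto (fun k => -(inner ℝ x (Y (ns (ms k))) : ℝ) - fc (Y (ns (ms k))))
              atTop (𝓝 (-(inner ℝ x ystar : ℝ) - fc ystar)) :=
            (hc.tendsto ystar).comp hconv
          exact (tendsto_nhds_unique hcont2 hsq).symm
        have := (h.continuous.tendsto ystar).comp hconv
        rw [hysT] at this
        exact this
      exact tendsto_of_tendsto_of_tendsto_of_le_of_le tendsto_const_nhds hq hlb hub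
    -- dominated convergence
    have hmeas : ∀ n, AEStronglyMeasurable (fun x => (ft x - g n x) / ε n) μ := fun n =>
      ((hftcont.sub (hgcont n)).div_const _).aestronglyMeasurable
    have hbd : ∀ n, ∀ᵐ x ∂μ, ‖(ft x - g n x) / ε n‖ ≤ ‖h‖ := by
      intro n
      apply Filter.Eventually.of_forall
      intro x
      have h1 := hgub n x
      have h2 := hglb n x
      rw [Real.norm_eq_abs, abs_div, abs_of_pos (hε0 n), div_le_iff₀ (hε0 n), abs_le]
      constructor <;> nlinarith [h1, h2]
    have hDCT := tendsto_integral_of_dominated_convergence (fun _ => ‖h‖) hmeas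
      (integrable_const _) hbd hlim
    have hineq : ∀ n, ∫ y, h y ∂ν ≤ ∫ x, (ft x - g n x) / ε n ∂μ := by
      intro n
      have h1 := hdual n
      have h2 : ∫ x, (ft x - g n x) / ε n ∂μ = (∫ x, (ft x - g n x) ∂μ) / ε n :=
        integral_div _ _
      rw [h2, le_div_iff₀ (hε0 n)]
      nlinarith [h1]
    exact ge_of_tendsto hDCT (Filter.Eventually.of_forall hineq)
  have hmap : μ.map T = ν := by
    have main2 : ∀ h : (Eu d) →ᵇ ℝ, ∫ y, h y ∂ν = ∫ x, h (T x) ∂μ := by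
      intro h
      refine le_antisymm (main h) ?_
      have hneg := main (-h)
      simp only [BoundedContinuousFunction.coe_neg, Pi.neg_apply] at hneg
      rw [integral_neg, integral_neg] at hneg
      linarith
    haveI : IsProbabilityMeasure (μ.map T) := Measure.isProbabilityMeasure_map hTmeas.aemeasurable
    apply ext_of_forall_lintegral_eq_of_IsFiniteMeasure
    intro f0
    have hlip : LipschitzWith 1 ((↑) : ℝ≥0 → ℝ) := isometry_subtype_coe.lipschitz
    set h : (Eu d) →ᵇ ℝ := BoundedContinuousFunction.comp _ hlip f0 with hhdef
    have h3 : ∫ x, h x ∂(μ.map T) = ∫ y, h y ∂ν := by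
      rw [integral_map hTmeas.aemeasurable h.continuous.aestronglyMeasurable]
      exact (main2 h).symm
    have h4 : (∫⁻ x, (f0 x : ℝ≥0∞) ∂(μ.map T)).toReal
        = (∫⁻ y, (f0 y : ℝ≥0∞) ∂ν).toReal := by
      rw [BoundedContinuousFunction.toReal_lintegral_coe_eq_integral,
        BoundedContinuousFunction.toReal_lintegral_coe_eq_integral]
      exact h3
    exact (ENNReal.toReal_eq_toReal_iff' (f0.lintegral_lt_top_of_nnreal _).ne
      (f0.lintegral_lt_top_of_nnreal _).ne).mp h4
  refine ⟨hmap, ?_⟩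
  -- Part 2 : optimality
  intro π hπ1 hπ2
  haveI hπprob : IsProbabilityMeasure π := by
    constructor
    have h1 : π.map Prod.fst Set.univ = 1 := by rw [hπ1]; exact measure_univ
    rwa [Measure.map_apply measurable_fst MeasurableSet.univ, Set.preimage_univ] at h1
  have hcost : Continuous fun p : (Eu d) × (Eu d) => -(inner ℝ p.1 p.2 : ℝ) :=
    (continuous_fst.inner continuous_snd).neg
  obtain ⟨R, hRsub⟩ := hK.isBounded.subset_closedBall 0
  obtain ⟨R', hR'sub⟩ := hK'.isBounded.subset_closedBall 0
  have hRK : ∀ z ∈ K, ‖z‖ ≤ R := fun z hz => by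
    have := hRsub hz
    rwa [Metric.mem_closedBall, dist_zero_right] at this
  have hR'K' : ∀ z ∈ K', ‖z‖ ≤ R' := fun z hz => by
    have := hR'sub hz
    rwa [Metric.mem_closedBall, dist_zero_right] at this
  obtain ⟨z0, hz0⟩ := hKne
  have hR0 : 0 ≤ R := (norm_nonneg z0).trans (hRK z0 hz0)
  have hπK : ∀ᵐ p ∂π, p.1 ∈ K ∧ p.2 ∈ K' := by
    have h1 : π (Prod.fst ⁻¹' Kᶜ) = 0 := by
      rw [← Measure.map_apply measurable_fst hKm.compl, hπ1]; exact hμKc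
    have h2 : π (Prod.snd ⁻¹' K'ᶜ) = 0 := by
      rw [← Measure.map_apply measurable_snd hK'm.compl, hπ2]; exact hνK'c
    have e1 : ∀ᵐ p ∂π, p.1 ∈ K := by
      rw [ae_iff]; exact h1
    have e2 : ∀ᵐ p ∂π, p.2 ∈ K' := by
      rw [ae_iff]; exact h2
    exact e1.and e2
  obtain ⟨Mfc, hMfc⟩ := hK'.exists_bound_of_continuousOn hfccont.continuousOn
  obtain ⟨Mf, hMf⟩ := hK.exists_bound_of_continuousOn hfcont.continuousOn
  have hmapmeas : Measurable fun x : (Eu d) => (x, T x) := measurable_id.prodMk hTmeas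
  have hlhs : (∫ p, -(inner ℝ p.1 p.2 : ℝ) ∂(μ.map (fun x => (x, T x))))
      = ∫ x, -(inner ℝ x (T x) : ℝ) ∂μ :=
    integral_map hmapmeas.aemeasurable hcost.aestronglyMeasurable
  have hintfcT : Integrable (fun x => fc (T x)) μ := by
    apply Integrable.mono' (integrable_const Mfc)
      ((hfccont.measurable.comp hTmeas).aestronglyMeasurable)
    filter_upwards [hTK'] with x hx
    exact hMfc _ hx
  have haeq : ∀ᵐ x ∂μ, -(inner ℝ x (T x) : ℝ) = f x + fc (T x) :=
    hkey.mono fun x hx => by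
      have h1 := hx.2.2.1
      linarith
  have hL2 : ∫ x, -(inner ℝ x (T x) : ℝ) ∂μ = (∫ z, f z ∂μ) + ∫ x, fc (T x) ∂μ := by
    rw [integral_congr_ae haeq, integral_add (hintμ f hfcont) hintfcT]
  have hfcmarg : ∫ x, fc (T x) ∂μ = ∫ w, fc w ∂ν := by
    rw [← hmap]
    exact (integral_map hTmeas.aemeasurable hfccont.aestronglyMeasurable).symm
  have hπcost : Integrable (fun p : (Eu d) × (Eu d) => -(inner ℝ p.1 p.2 : ℝ)) π := by
    apply Integrable.mono' (integrable_const (R * R')) hcost.aestronglyMeasurable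
    filter_upwards [hπK] with p hp
    rw [Real.norm_eq_abs, abs_neg]
    calc |(inner ℝ p.1 p.2 : ℝ)| ≤ ‖p.1‖ * ‖p.2‖ := abs_real_inner_le_norm _ _
      _ ≤ R * R' := mul_le_mul (hRK _ hp.1) (hR'K' _ hp.2) (norm_nonneg _) hR0
  have hπf1 : Integrable (fun p : (Eu d) × (Eu d) => f p.1) π := by
    apply Integrable.mono' (integrable_const Mf)
      ((hfcont.comp continuous_fst).aestronglyMeasurable)
    filter_upwards [hπK] with p hp
    exact hMf _ hp.1
  have hπfc2 : Integrable (fun p : (Eu d) × (Eu d) => fc p.2) π := by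
    apply Integrable.mono' (integrable_const Mfc)
      ((hfccont.comp continuous_snd).aestronglyMeasurable)
    filter_upwards [hπK] with p hp
    exact hMfc _ hp.2
  have hptwise : ∀ᵐ p ∂π, f p.1 + fc p.2 ≤ -(inner ℝ p.1 p.2 : ℝ) := by
    filter_upwards [hπK] with p hp
    have h1 : fc p.2 ≤ -(inner ℝ p.2 p.1 : ℝ) - f p.1 :=
      infC_le hK hfcont.continuousOn hp.1 p.2
    rw [real_inner_comm] at h1
    linarith
  have hmarg1 : ∫ p, f p.1 ∂π = ∫ z, f z ∂μ := by
    rw [← hπ1]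
    exact (integral_map measurable_fst.aemeasurable hfcont.aestronglyMeasurable).symm
  have hmarg2 : ∫ p, fc p.2 ∂π = ∫ w, fc w ∂ν := by
    rw [← hπ2]
    exact (integral_map measurable_snd.aemeasurable hfccont.aestronglyMeasurable).symm
  have hsum : ∫ p, (f p.1 + fc p.2) ∂π = (∫ z, f z ∂μ) + ∫ w, fc w ∂ν := by
    rw [integral_add hπf1 hπfc2, hmarg1, hmarg2]
  have hfinal := integral_mono_ae (hπf1.add hπfc2) hπcost hptwise
  calc (∫ p, -(inner ℝ p.1 p.2 : ℝ) ∂(μ.map (fun x => (x, T x))))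
      = ∫ x, -(inner ℝ x (T x) : ℝ) ∂μ := hlhs
    _ = (∫ z, f z ∂μ) + ∫ w, fc w ∂ν := by rw [hL2, hfcmarg]
    _ = ∫ p, (f p.1 + fc p.2) ∂π := hsum.symm
    _ ≤ ∫ p, -(inner ℝ p.1 p.2 : ℝ) ∂π := hfinal

end MainProof

end
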